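/- Let R = M_k(F) be the ring of all k×k matrices over a field F of characteristic different from 2, where k ≥ 3. Let b, c ∈ R and let s, t ≥ 0 be fixed integers with s + t ≠ 0. Suppose that [x₁,x₂]^s (b[x₁,x₂] + [x₁,x₂]c) [x₁,x₂]^t ∈ Z(R) for all x₁, x₂ ∈ R. Then b_{ij} = -c_{ji} and b_{ij} = c_{ji} for all i ≠ j; in particular, b and c are diagonal matrices. -/

import Mathlib

open Matrix


private lemma pow_mem3 {M : Type*} [Monoid M] {a : M} (h3 : a * a * a = a) :
    ∀ n : ℕ, a ^ n = 1 ∨ a ^ n = a ∨ a ^ n = a * a := by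
  intro n
  induction n with
  | zero => left; exact pow_zero a
  | succ n ih =>
    rw [pow_succ]
    rcases ih with h | h | h
    · right; left; rw [h, one_mul]
    · right; right; rw [h]
    · right; left; rw [h, h3]

private lemma pow_mem3_pos {M : Type*} [Monoid M] {a : M} (h3 : a * a * a = a) :
    ∀ n : ℕ, 1 ≤ n → a ^ n = a ∨ a ^ n = a * a := by
  intro n hn
  induction n with
  | zero => omega
  | succ n ih =>
    rcases Nat.lt_or_ge 1 (n+1) with h1 | h1
    · have hn' : 1 ≤ n := by omega
      rw [pow_succ]
      rcases ih hn' with h | h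
      · right; rw [h]
      · left; rw [h, h3]
    · have : n = 0 := by omega
      subst this; left; exact pow_one a

private lemma central_offdiag {F : Type*} [Field F] {k : ℕ} {M : Matrix (Fin k) (Fin k) F}
    (hM : ∀ y, M * y = y * M) {p q : Fin k} (hpq : p ≠ q) : M p q = 0 := by
  have := congrArg (fun X => X p q) (hM (Matrix.single q q 1))
  simpa [hpq] using this

private lemma central_diag {F : Type*} [Field F] {k : ℕ} {M : Matrix (Fin k) (Fin k) F}
    (hM : ∀ y, M * y = y * M) (p q : Fin k) : M p p = M q q := by
  have := congrArg (fun X => X p q) (hM (Matrix.single p q 1))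
  simpa using this

private lemma exists_third {k : ℕ} (hk : 3 ≤ k) (i j : Fin k) : ∃ m : Fin k, m ≠ i ∧ m ≠ j := by
  by_contra hcon
  push_neg at hcon
  have hsub : (Finset.univ : Finset (Fin k)) ⊆ {i, j} := by
    intro m _
    rcases eq_or_ne m i with h | h
    · simp [h]
    · simp [hcon m h]
  have := Finset.card_le_card hsub
  have hcard : ({i, j} : Finset (Fin k)).card ≤ 2 := Finset.card_insert_le _ _ |>.trans (by simp)
  simp [Finset.card_univ] at this
  omega

set_option maxHeartbeats 2000000 in
/-- Let `R = M_k(F)` with `char F ≠ 2`, `k ≥ 3`, `b, c ∈ R`, and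
`s, t ≥ 0` with `s + t ≠ 0`.  If `[x₁,x₂]^s (b[x₁,x₂] + [x₁,x₂]c) [x₁,x₂]^t ∈ Z(R)`
for all `x₁, x₂ ∈ R`, then `bᵢⱼ = -cⱼᵢ` and `bᵢⱼ = cⱼᵢ` for all `i ≠ j`; in
particular `b` and `c` are diagonal. -/
theorem stmt_10 {F : Type*} [Field F] (hF : ringChar F ≠ 2) {k : ℕ} (hk : 3 ≤ k)
    (b c : Matrix (Fin k) (Fin k) F) (s t : ℕ) (hst : s + t ≠ 0)
    (h : ∀ x₁ x₂ : Matrix (Fin k) (Fin k) F,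
      ∀ y : Matrix (Fin k) (Fin k) F,
        ((x₁ * x₂ - x₂ * x₁) ^ s *
            (b * (x₁ * x₂ - x₂ * x₁) + (x₁ * x₂ - x₂ * x₁) * c) *
            (x₁ * x₂ - x₂ * x₁) ^ t) * y =
          y * ((x₁ * x₂ - x₂ * x₁) ^ s *
            (b * (x₁ * x₂ - x₂ * x₁) + (x₁ * x₂ - x₂ * x₁) * c) *
            (x₁ * x₂ - x₂ * x₁) ^ t)) :
    (∀ i j : Fin k, i ≠ j → b i j = -c j i ∧ b i j = c j i) ∧
    b.IsDiag ∧ c.IsDiag := by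
  have h2 : (2 : F) ≠ 0 := by
    intro h20
    have hdvd : ringChar F ∣ 2 := (ringChar.spec F 2).mp (by exact_mod_cast h20)
    rcases (Nat.prime_two.eq_one_or_self_of_dvd _ hdvd) with h1 | h1
    · exact CharP.ringChar_ne_one h1
    · exact hF h1
  have key : ∀ i j : Fin k, i ≠ j → b i j = 0 ∧ c i j = 0 := by
    intro i j hij
    obtain ⟨m, hmi, hmj⟩ := exists_third hk i j
    -- Equation (A): b i j = c i j, via d = E i i - E j j = [E i j, E j i]
    have hA : b i j = c i j := by
      have hM := h (Matrix.single i j 1) (Matrix.single j i 1)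
      have hcomm : Matrix.single i j (1:F) * Matrix.single j i 1 -
          Matrix.single j i 1 * Matrix.single i j 1 =
          Matrix.single i i 1 - Matrix.single j j 1 := by
        simp [hij, hij.symm]
      rw [hcomm] at hM
      set d : Matrix (Fin k) (Fin k) F := Matrix.single i i 1 - Matrix.single j j 1 with hd
      have h3 : d * d * d = d := by
        rw [hd]
        simp [mul_sub, sub_mul, add_mul, mul_add, hij, hij.symm]
      have hoff := central_offdiag hM hij
      rcases pow_mem3 h3 s with hs | hs | hs <;>
        rcases pow_mem3 h3 t with ht | ht | ht <;>
          rw [hs, ht] at hoff <;>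
          simp only [hd] at hoff <;>
          simp [mul_sub, sub_mul, add_mul, mul_add, mul_assoc, hij, hij.symm] at hoff <;>
          first
            | exact hoff
            | (linear_combination hoff)
            | (linear_combination -hoff)
    rcases Nat.eq_zero_or_pos s with hs0 | hs1
    · -- Case s = 0 (so t ≥ 1): equation (E) gives b i j = 0 directly.
      have ht1 : 1 ≤ t := by omega
      have hbij : b i j = 0 := by
        have hM := h (Matrix.single j m 1) (Matrix.single m j 1 + Matrix.single m i 1)
        have hcomm : Matrix.single j m (1:F) * (Matrix.single m j 1 + Matrix.single m i 1) -
            (Matrix.single m j 1 + Matrix.single m i 1) * Matrix.single j m 1 =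
            Matrix.single j j 1 + Matrix.single j i 1 - Matrix.single m m 1 := by
          simp [mul_add, add_mul, hij, hij.symm, hmi, hmj, hmi.symm, hmj.symm]
          all_goals abel
        rw [hcomm] at hM
        set a : Matrix (Fin k) (Fin k) F :=
          Matrix.single j j 1 + Matrix.single j i 1 - Matrix.single m m 1 with ha
        have h3 : a * a * a = a := by
          rw [ha]
          simp [mul_sub, sub_mul, add_mul, mul_add, hij, hij.symm, hmi, hmj, hmi.symm, hmj.symm]
          all_goals abel
        have hoff := central_offdiag hM hij
        rcases pow_mem3_pos h3 t ht1 with ht | ht <;>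
          rw [hs0, pow_zero, ht] at hoff <;>
          simp only [ha] at hoff <;>
          simp [mul_sub, sub_mul, add_mul, mul_add, mul_assoc, hij, hij.symm,
            hmi, hmj, hmi.symm, hmj.symm] at hoff <;>
          first
            | exact hoff
            | (linear_combination hoff)
            | (linear_combination -hoff)
      exact ⟨hbij, by rw [← hA]; exact hbij⟩
    · -- Case s ≥ 1: use a₂ = E i i + E j i - E m m = [E i m + E j m, E m i]
      have hM := h (Matrix.single i m 1 + Matrix.single j m 1) (Matrix.single m i 1)
      have hcomm : (Matrix.single i m (1:F) + Matrix.single j m 1) * Matrix.single m i 1 -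
          Matrix.single m i 1 * (Matrix.single i m 1 + Matrix.single j m 1) =
          Matrix.single i i 1 + Matrix.single j i 1 - Matrix.single m m 1 := by
        simp [mul_add, add_mul, hij, hij.symm, hmi, hmj, hmi.symm, hmj.symm]
        all_goals abel
      rw [hcomm] at hM
      set a : Matrix (Fin k) (Fin k) F :=
        Matrix.single i i 1 + Matrix.single j i 1 - Matrix.single m m 1 with ha
      have h3 : a * a * a = a := by
        rw [ha]
        simp [mul_sub, sub_mul, add_mul, mul_add, hij, hij.symm, hmi, hmj, hmi.symm, hmj.symm]
        all_goals abel
      rcases Nat.eq_zero_or_pos t with ht0 | ht1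
      · -- Equation (D): c i j = 0
        have hcij : c i j = 0 := by
          have hoff := central_offdiag hM hij
          rcases pow_mem3_pos h3 s hs1 with hs | hs <;>
            rw [hs, ht0, pow_zero] at hoff <;>
            simp only [ha] at hoff <;>
            simp [mul_sub, sub_mul, add_mul, mul_add, mul_assoc, hij, hij.symm,
              hmi, hmj, hmi.symm, hmj.symm] at hoff <;>
            first
              | exact hoff
              | (linear_combination hoff)
              | (linear_combination -hoff)
        exact ⟨by rw [hA]; exact hcij, hcij⟩
      · -- Equations (B) and (C):
        -- (B): b i i + c i i = 0, via d' = E i i - E m m = [E i m, E m i]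
        have hB : b i i + c i i = 0 := by
          have hM' := h (Matrix.single i m 1) (Matrix.single m i 1)
          have hcomm' : Matrix.single i m (1:F) * Matrix.single m i 1 -
              Matrix.single m i 1 * Matrix.single i m 1 =
              Matrix.single i i 1 - Matrix.single m m 1 := by
            simp [hmi, hmi.symm]
          rw [hcomm'] at hM'
          set d : Matrix (Fin k) (Fin k) F :=
            Matrix.single i i 1 - Matrix.single m m 1 with hd
          have h3' : d * d * d = d := by
            rw [hd]
            simp [mul_sub, sub_mul, add_mul, mul_add, hmi, hmi.symm]
          have hdiag := central_diag hM' i j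
          rcases pow_mem3_pos h3' s hs1 with hs | hs <;>
            rcases pow_mem3 h3' t with ht | ht | ht <;>
              rw [hs, ht] at hdiag <;>
              simp only [hd] at hdiag <;>
              simp [mul_sub, sub_mul, add_mul, mul_add, mul_assoc, hij, hij.symm,
                hmi, hmj, hmi.symm, hmj.symm] at hdiag <;>
              first
                | exact hdiag
                | (linear_combination hdiag)
                | (linear_combination -hdiag)
        -- (C): b i i + b i j + c i i + c i j = 0
        have hC : b i i + b i j + c i i + c i j = 0 := by
          have hoff := central_offdiag hM hij.symm
          rcases pow_mem3_pos h3 s hs1 with hs | hs <;>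
            rcases pow_mem3_pos h3 t ht1 with ht | ht <;>
              rw [hs, ht] at hoff <;>
              simp only [ha] at hoff <;>
              simp [mul_sub, sub_mul, add_mul, mul_add, mul_assoc, hij, hij.symm,
                hmi, hmj, hmi.symm, hmj.symm] at hoff <;>
              first
                | (linear_combination hoff)
                | (linear_combination -hoff)
        have hbij : b i j = 0 := by
          have h2b : 2 * b i j = 0 := by linear_combination hC - hB + hA
          field_simp at h2b
          rcases mul_eq_zero.mp h2b with h' | h'
          · exact absurd h' h2
          · exact h'
        exact ⟨hbij, by rw [← hA]; exact hbij⟩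
  refine ⟨fun i j hij => ?_, fun i j hij => (key i j hij).1, fun i j hij => (key i j hij).2⟩
  obtain ⟨hb, _⟩ := key i j hij
  obtain ⟨_, hc⟩ := key j i hij.symm
  exact ⟨by rw [hb, hc, neg_zero], by rw [hb, hc]⟩
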